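/- ∏_{n≥0} [((4n+1)(4n+4)) / ((4n+2)(4n+3))]^{t_n} = π^{3/4}·√2 / Γ(1/4). -/

import Mathlib

open Filter Finset Topology

def tm (n : ℕ) : ℕ := (Nat.digits 2 n).sum % 2

lemma tm_le (n : ℕ) : tm n ≤ 1 := Nat.lt_succ_iff.mp (Nat.mod_lt _ (by norm_num))

lemma tm_two_mul (n : ℕ) : tm (2 * n) = tm n := by
  rcases Nat.eq_zero_or_pos n with h | h
  · simp [h]
  · unfold tm
    rw [Nat.digits_def' (by norm_num) (by omega)]
    simp [Nat.mul_div_cancel_left _ (by norm_num : 0 < 2), Nat.mul_mod_right]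

lemma tm_two_mul_add_one (n : ℕ) : tm (2 * n + 1) = 1 - tm n := by
  unfold tm
  rw [Nat.digits_def' (by norm_num) (by omega)]
  have h1 : (2 * n + 1) % 2 = 1 := by omega
  have h2 : (2 * n + 1) / 2 = n := by omega
  rw [h1, h2]
  simp only [List.sum_cons]
  omega

/-- `(-1)^(tm n)` as an integer. -/
def eps (n : ℕ) : ℤ := 1 - 2 * (tm n : ℤ)

lemma eps_zero : eps 0 = 1 := by simp [eps, tm]

lemma eps_two_mul (n : ℕ) : eps (2 * n) = eps n := by simp [eps, tm_two_mul]

lemma eps_two_mul_add_one (n : ℕ) : eps (2 * n + 1) = -eps n := by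
  have := tm_le n
  simp only [eps, tm_two_mul_add_one]
  omega

lemma abs_eps (n : ℕ) : |eps n| = 1 := by
  have := tm_le n
  interval_cases h : tm n <;> simp [eps, h]

/-- pair-splitting of a signed product -/
lemma prod_eps_two_mul (F : ℕ → ℝ) (N : ℕ) :
    ∏ n ∈ range (2 * N), F n ^ eps n
      = ∏ m ∈ range N, (F (2 * m) ^ eps m * F (2 * m + 1) ^ (-eps m)) := by
  induction N with
  | zero => simp
  | succ N ih =>
    have : 2 * (N + 1) = (2 * N + 1) + 1 := by ring
    rw [this, prod_range_succ, prod_range_succ, ih, prod_range_succ,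
      eps_two_mul, eps_two_mul_add_one]
    ring

lemma abs_log_one_sub_le {x : ℝ} (h0 : 0 ≤ x) (h : x ≤ 1 / 2) :
    |Real.log (1 - x)| ≤ 2 * x := by
  have h1 : (0:ℝ) < 1 - x := by linarith
  rw [abs_of_nonpos (Real.log_nonpos (by linarith) (by linarith))]
  have : Real.exp (-(2 * x)) ≤ 1 - x := by
    have he : 1 + 2 * x ≤ Real.exp (2 * x) := by
      have := Real.add_one_le_exp (2 * x); linarith
    have hpos := Real.exp_pos (2 * x)
    rw [Real.exp_neg, inv_le_iff_one_le_mul₀ hpos]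
    nlinarith
  have := (Real.le_log_iff_exp_le h1).mpr this
  linarith

/-- Generic convergence of signed products. -/
lemma tendsto_prod_eps (d : ℕ → ℝ) (hd : ∀ n, 0 < d n)
    (hs : Summable fun n => |Real.log (d n)|) :
    Tendsto (fun N => ∏ n ∈ range N, d n ^ eps n) atTop
      (𝓝 (Real.exp (∑' n, (eps n : ℝ) * Real.log (d n)))) := by
  have key : ∀ N, ∏ n ∈ range N, d n ^ eps n
      = Real.exp (∑ n ∈ range N, (eps n : ℝ) * Real.log (d n)) := by
    intro N
    rw [Real.exp_sum]
    refine prod_congr rfl fun n _ => ?_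
    rw [← Real.rpow_intCast (d n) (eps n), Real.rpow_def_of_pos (hd n), mul_comm]
  have hsum : Summable fun n => (eps n : ℝ) * Real.log (d n) := by
    refine Summable.of_abs (hs.congr fun n => ?_)
    rw [abs_mul]
    have : |(eps n : ℝ)| = 1 := by rw [← Int.cast_abs, abs_eps]; norm_num
    rw [this, one_mul]
  simp only [key]
  exact Real.continuous_exp.continuousAt.tendsto.comp hsum.hasSum.tendsto_sum_nat

noncomputable def aa (n : ℕ) : ℝ := ((4*n+1)*(4*n+4))/((4*n+2)*(4*n+3))

lemma aa_pos (n : ℕ) : 0 < aa n := by unfold aa; positivity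

lemma key_prod_aa {N : ℕ} (hN : 1 ≤ N) :
    ∏ n ∈ range (N+1), aa n
      = Real.GammaSeq (1/2) N * Real.GammaSeq (3/4) N
        / (Real.GammaSeq (1/4) N * Real.GammaSeq 1 N) := by
  have h1 : ∏ n ∈ range (N+1), aa n
      = (∏ j ∈ range (N+1), ((1:ℝ)/4 + j)) * (∏ j ∈ range (N+1), ((1:ℝ) + j))
        / ((∏ j ∈ range (N+1), ((1:ℝ)/2 + j)) * (∏ j ∈ range (N+1), ((3:ℝ)/4 + j))) := by
    rw [← prod_mul_distrib, ← prod_mul_distrib, ← prod_div_distrib]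
    refine prod_congr rfl fun n _ => ?_
    unfold aa
    rw [div_eq_div_iff (by positivity) (by positivity)]
    ring
  rw [h1]
  unfold Real.GammaSeq
  have hp : (0:ℝ) < (N:ℝ) := by exact_mod_cast hN
  have hfac : (0:ℝ) < (N.factorial : ℝ) := by positivity
  have hQ : ∀ s : ℝ, 0 < s → (0:ℝ) < ∏ j ∈ range (N+1), (s + (j:ℝ)) :=
    fun s hs => prod_pos fun j _ => by positivity
  have hq1 := hQ (1/4) (by norm_num)
  have hq2 := hQ (1/2) (by norm_num)
  have hq3 := hQ (3/4) (by norm_num)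
  have hq4 := hQ 1 (by norm_num)
  have hr : (N:ℝ) ^ ((1:ℝ)/2) * (N:ℝ) ^ ((3:ℝ)/4) = (N:ℝ) ^ ((1:ℝ)/4) * (N:ℝ) := by
    have h54 : ((1:ℝ)/2 + 3/4) = 1/4 + 1 := by norm_num
    rw [← Real.rpow_add hp, h54, Real.rpow_add hp, Real.rpow_one]
  rw [Real.rpow_one]
  set q1 := ∏ j ∈ range (N+1), ((1:ℝ)/4 + j) with hq1d
  set q2 := ∏ j ∈ range (N+1), ((1:ℝ)/2 + j) with hq2d
  set q3 := ∏ j ∈ range (N+1), ((3:ℝ)/4 + j) with hq3d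
  set q4 := ∏ j ∈ range (N+1), ((1:ℝ) + j) with hq4d
  rw [div_eq_div_iff (by positivity) (by positivity)]
  field_simp
  linear_combination (-1 : ℝ) * hr

lemma tendsto_prod_aa :
    Tendsto (fun N => ∏ n ∈ range N, aa n) atTop
      (𝓝 (Real.Gamma (1/2) * Real.Gamma (3/4) / Real.Gamma (1/4))) := by
  have hden : Real.Gamma (1/4) * Real.Gamma 1 ≠ 0 := by
    have := Real.Gamma_pos_of_pos (show (0:ℝ) < 1/4 by norm_num)
    have := Real.Gamma_pos_of_pos (show (0:ℝ) < 1 by norm_num)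
    positivity
  have h : Tendsto (fun N => Real.GammaSeq (1/2) N * Real.GammaSeq (3/4) N
      / (Real.GammaSeq (1/4) N * Real.GammaSeq 1 N)) atTop
      (𝓝 (Real.Gamma (1/2) * Real.Gamma (3/4) / (Real.Gamma (1/4) * Real.Gamma 1))) :=
    (((Real.GammaSeq_tendsto_Gamma (1/2)).mul (Real.GammaSeq_tendsto_Gamma (3/4))).div
      ((Real.GammaSeq_tendsto_Gamma (1/4)).mul (Real.GammaSeq_tendsto_Gamma 1)) hden)
  have h2 : Tendsto (fun N => ∏ n ∈ range (N+1), aa n) atTop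
      (𝓝 (Real.Gamma (1/2) * Real.Gamma (3/4) / (Real.Gamma (1/4) * Real.Gamma 1))) := by
    refine h.congr' ?_
    filter_upwards [eventually_ge_atTop 1] with N hN
    exact (key_prod_aa hN).symm
  rw [Real.Gamma_one, mul_one] at h2
  exact (tendsto_add_atTop_iff_nat 1).mp h2

noncomputable def ff (n : ℕ) : ℝ := (2*n+1)/(2*n+2)
noncomputable def hh (n : ℕ) : ℝ := if n = 0 then 1 else (2*n)/(2*n+1)
noncomputable def cc (n : ℕ) : ℝ := if n = 0 then 1 else (n)/((n:ℝ)+1)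
noncomputable def bb (n : ℕ) : ℝ := if n = 0 then 1 else ((4*n)*(4*n+3))/((4*n+1)*(4*n+2))

lemma ff_pos (n : ℕ) : 0 < ff n := by unfold ff; positivity
lemma hh_pos (n : ℕ) : 0 < hh n := by
  unfold hh; split
  · norm_num
  · have : (0:ℝ) < (n:ℝ) := by
      rcases Nat.eq_zero_or_pos n with h | h
      · simp_all
      · exact_mod_cast h
    positivity
lemma cc_pos (n : ℕ) : 0 < cc n := by
  unfold cc; split
  · norm_num
  · have : (0:ℝ) < (n:ℝ) := by
      rcases Nat.eq_zero_or_pos n with h | h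
      · simp_all
      · exact_mod_cast h
    positivity
lemma bb_pos (n : ℕ) : 0 < bb n := by
  unfold bb; split
  · norm_num
  · have : (0:ℝ) < (n:ℝ) := by
      rcases Nat.eq_zero_or_pos n with h | h
      · simp_all
      · exact_mod_cast h
    positivity

-- summability bounds
lemma summable_sq : Summable (fun n : ℕ => 1/((n:ℝ)+1)^2) := by
  have := Real.summable_one_div_nat_pow.mpr (show 1 < 2 by norm_num)
  have h2 := (summable_nat_add_iff 1).mpr this
  refine h2.congr fun n => ?_
  push_cast
  ring

lemma abs_log_aa (n : ℕ) : |Real.log (aa n)| ≤ 1/((n:ℝ)+1)^2 := by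
  have hden : (0:ℝ) < (4*n+2)*(4*n+3) := by positivity
  have haa : aa n = 1 - 2/((4*(n:ℝ)+2)*(4*(n:ℝ)+3)) := by
    unfold aa
    field_simp
    ring
  rw [haa]
  have hx0 : (0:ℝ) ≤ 2/((4*(n:ℝ)+2)*(4*(n:ℝ)+3)) := by positivity
  have hx1 : 2/((4*(n:ℝ)+2)*(4*(n:ℝ)+3)) ≤ 1/2 := by
    rw [div_le_div_iff₀ hden (by norm_num)]
    nlinarith [Nat.cast_nonneg (α := ℝ) n]
  refine le_trans (abs_log_one_sub_le hx0 hx1) ?_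
  have h4 : 2 * (2/((4*(n:ℝ)+2)*(4*(n:ℝ)+3))) = 4/((4*(n:ℝ)+2)*(4*(n:ℝ)+3)) := by ring
  rw [h4, div_le_div_iff₀ (by positivity) (by positivity)]
  nlinarith [Nat.cast_nonneg (α := ℝ) n]

lemma abs_log_bb (n : ℕ) : |Real.log (bb n)| ≤ 1/((n:ℝ)+1)^2 := by
  unfold bb
  split
  · simp; positivity
  · rename_i h
    have hn : 1 ≤ n := Nat.one_le_iff_ne_zero.mpr h
    have hn' : (1:ℝ) ≤ (n:ℝ) := by exact_mod_cast hn
    have hden : (0:ℝ) < (4*n+1)*(4*n+2) := by positivity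
    have hbb : (4*(n:ℝ))*(4*(n:ℝ)+3)/((4*(n:ℝ)+1)*(4*(n:ℝ)+2))
        = 1 - 2/((4*(n:ℝ)+1)*(4*(n:ℝ)+2)) := by
      field_simp
      ring
    rw [hbb]
    have hx0 : (0:ℝ) ≤ 2/((4*(n:ℝ)+1)*(4*(n:ℝ)+2)) := by positivity
    have hx1 : 2/((4*(n:ℝ)+1)*(4*(n:ℝ)+2)) ≤ 1/2 := by
      rw [div_le_div_iff₀ hden (by norm_num)]
      nlinarith
    refine le_trans (abs_log_one_sub_le hx0 hx1) ?_
    have h4 : 2 * (2/((4*(n:ℝ)+1)*(4*(n:ℝ)+2))) = 4/((4*(n:ℝ)+1)*(4*(n:ℝ)+2)) := by ring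
    rw [h4, div_le_div_iff₀ (by positivity) (by positivity)]
    nlinarith

-- Finite identities
lemma I2 (N : ℕ) : ∏ n ∈ range (2*N), ff n ^ eps n = ∏ m ∈ range N, aa m ^ eps m := by
  rw [prod_eps_two_mul]
  refine prod_congr rfl fun m _ => ?_
  rw [zpow_neg, ← div_eq_mul_inv, ← div_zpow]
  congr 1
  rw [div_eq_iff (ne_of_gt (ff_pos (2*m+1)))]
  unfold ff aa
  rw [div_mul_div_comm, div_eq_div_iff (by positivity) (by positivity)]
  push_cast
  ring

lemma I3 {N : ℕ} (hN : 1 ≤ N) :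
    ∏ n ∈ range (2*N), hh n ^ eps n = (3/2) * ∏ m ∈ range N, bb m ^ eps m := by
  rw [prod_eps_two_mul]
  have step : ∀ m ∈ range N, hh (2*m) ^ eps m * hh (2*m+1) ^ (-eps m)
      = (if m = 0 then (3:ℝ)/2 else 1) * bb m ^ eps m := by
    intro m _
    rcases Nat.eq_zero_or_pos m with h | h
    · subst h
      rw [eps_zero]
      norm_num [hh, bb]
    · have hm : m ≠ 0 := by omega
      have h2m : 2*m ≠ 0 := by omega
      have h2m1 : 2*m+1 ≠ 0 := by omega
      rw [if_neg hm]
      rw [zpow_neg, ← div_eq_mul_inv, ← div_zpow, one_mul]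
      congr 1
      rw [div_eq_iff (ne_of_gt (hh_pos (2*m+1)))]
      simp only [hh, bb]
      rw [if_neg h2m, if_neg h2m1, if_neg hm]
      have h2mpos : (0:ℝ) < ((2*m : ℕ) : ℝ) := by exact_mod_cast (by omega : 0 < 2*m)
      rw [div_mul_div_comm, div_eq_div_iff (by positivity) (by positivity)]
      push_cast
      ring
  rw [prod_congr rfl step, prod_mul_distrib]
  congr 1
  rw [Finset.prod_ite_eq' (range N) 0 (fun _ => (3:ℝ)/2)]
  rw [if_pos (mem_range.mpr (by omega))]

lemma I4 {N : ℕ} (hN : 1 ≤ N) :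
    (∏ n ∈ range N, ff n ^ eps n) * (∏ n ∈ range N, hh n ^ eps n)
      = (1/2) * ∏ n ∈ range N, cc n ^ eps n := by
  rw [← prod_mul_distrib]
  have step : ∀ n ∈ range N, ff n ^ eps n * hh n ^ eps n
      = (if n = 0 then (1:ℝ)/2 else 1) * cc n ^ eps n := by
    intro n _
    rw [← mul_zpow]
    rcases Nat.eq_zero_or_pos n with h | h
    · subst h
      rw [eps_zero]
      norm_num [ff, hh, cc]
    · have hn : n ≠ 0 := by omega
      rw [if_neg hn, one_mul]
      congr 1
      simp only [ff, hh, cc]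
      rw [if_neg hn, if_neg hn]
      have hnpos : (0:ℝ) < (n:ℝ) := by exact_mod_cast h
      rw [div_mul_div_comm, div_eq_div_iff (by positivity) (by positivity)]
      ring
  rw [prod_congr rfl step, prod_mul_distrib]
  congr 1
  rw [Finset.prod_ite_eq' (range N) 0 (fun _ => (1:ℝ)/2)]
  rw [if_pos (mem_range.mpr (by omega))]

lemma I5 (N : ℕ) : ∏ n ∈ range (2*N), cc n ^ eps n
    = (∏ n ∈ range N, hh n ^ eps n) * (∏ n ∈ range N, ff n ^ eps n)⁻¹ := by
  rw [prod_eps_two_mul]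
  have step : ∀ m ∈ range N, cc (2*m) ^ eps m * cc (2*m+1) ^ (-eps m)
      = hh m ^ eps m * (ff m ^ eps m)⁻¹ := by
    intro m _
    have e1 : cc (2*m) = hh m := by
      rcases Nat.eq_zero_or_pos m with h | h
      · subst h; norm_num [cc, hh]
      · have hm : m ≠ 0 := by omega
        have h2m : 2*m ≠ 0 := by omega
        simp only [cc, hh]
        rw [if_neg h2m, if_neg hm]
        have hm' : (1:ℝ) ≤ (m:ℝ) := by exact_mod_cast h
        rw [div_eq_div_iff (by positivity) (by positivity)]
        push_cast
        ring
    have e2 : cc (2*m+1) = ff m := by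
      have h2m1 : 2*m+1 ≠ 0 := by omega
      simp only [cc, ff]
      rw [if_neg h2m1]
      rw [div_eq_div_iff (by positivity) (by positivity)]
      push_cast
      ring
    rw [e1, e2, zpow_neg]
  rw [prod_congr rfl step, prod_mul_distrib, prod_inv_distrib]

theorem prod_tn_gamma :
    Tendsto (fun N => ∏ n ∈ Finset.range N,
        ((((4 * (n : ℝ) + 1) * (4 * (n : ℝ) + 4)) / ((4 * (n : ℝ) + 2) * (4 * (n : ℝ) + 3)))) ^ (tm n))
      atTop (𝓝 (Real.pi ^ ((3 : ℝ) / 4) * Real.sqrt 2 / Real.Gamma (1 / 4))) := by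
  -- summable log bounds
  have hsa : Summable fun n => |Real.log (aa n)| :=
    Summable.of_nonneg_of_le (fun n => abs_nonneg _) abs_log_aa summable_sq
  have hsb : Summable fun n => |Real.log (bb n)| :=
    Summable.of_nonneg_of_le (fun n => abs_nonneg _) abs_log_bb summable_sq
  set W : ℝ := Real.exp (∑' n, (eps n : ℝ) * Real.log (aa n)) with hWdef
  set B : ℝ := Real.exp (∑' n, (eps n : ℝ) * Real.log (bb n)) with hBdef
  have hWpos : 0 < W := Real.exp_pos _
  have hBpos : 0 < B := Real.exp_pos _
  have hW : Tendsto (fun N => ∏ m ∈ range N, aa m ^ eps m) atTop (𝓝 W) :=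
    tendsto_prod_eps aa aa_pos hsa
  have hB : Tendsto (fun N => ∏ m ∈ range N, bb m ^ eps m) atTop (𝓝 B) :=
    tendsto_prod_eps bb bb_pos hsb
  have h2 : Tendsto (fun N : ℕ => 2 * N) atTop atTop :=
    tendsto_atTop_mono (fun n => Nat.le_mul_of_pos_left n (by norm_num)) tendsto_id
  -- limits of even-index partial products
  have hW2 : Tendsto (fun N => ∏ n ∈ range (2*N), ff n ^ eps n) atTop (𝓝 W) := by
    simp only [I2]; exact hW
  have hA2 : Tendsto (fun N => ∏ n ∈ range (2*N), hh n ^ eps n) atTop (𝓝 ((3/2) * B)) := by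
    refine (hB.const_mul (3/2)).congr' ?_
    filter_upwards [eventually_ge_atTop 1] with N hN
    exact (I3 hN).symm
  -- functional equation in the limit
  have heqW : W * ((3/2) * B) = (1/2) * ((3/2) * B * W⁻¹) := by
    have hL : Tendsto (fun M => (∏ n ∈ range (2*(2*M)), ff n ^ eps n)
        * (∏ n ∈ range (2*(2*M)), hh n ^ eps n)) atTop (𝓝 (W * ((3/2) * B))) := by
      have := (hW2.comp h2).mul (hA2.comp h2)
      simpa [Function.comp] using this
    have hR : Tendsto (fun M => (1/2 : ℝ) * ((∏ n ∈ range (2*M), hh n ^ eps n)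
        * (∏ n ∈ range (2*M), ff n ^ eps n)⁻¹)) atTop
        (𝓝 ((1/2) * ((3/2) * B * W⁻¹))) :=
      ((hA2.mul (hW2.inv₀ (ne_of_gt hWpos)))).const_mul (1/2)
    refine tendsto_nhds_unique (hL.congr' ?_) hR
    filter_upwards [eventually_ge_atTop 1] with M hM
    rw [I4 (show 1 ≤ 2*(2*M) by omega), ← I5 (2*M)]
  have hWsq : W^2 = 1/2 := by
    have hc : ((3:ℝ)/2) * B ≠ 0 := by positivity
    have h1 : W^2 * ((3/2)*B) = (1/2) * ((3/2)*B) := by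
      calc W^2*((3/2)*B) = W*((3/2)*B)*W := by ring
      _ = (1/2)*((3/2)*B*W⁻¹)*W := by rw [heqW]
      _ = (1/2)*((3/2)*B)*(W⁻¹*W) := by ring
      _ = (1/2)*((3/2)*B) := by rw [inv_mul_cancel₀ (ne_of_gt hWpos), mul_one]
    exact mul_right_cancel₀ hc h1
  -- squared partial products
  have hPsq : ∀ N, (∏ n ∈ range N, aa n ^ tm n)^2
      = (∏ n ∈ range N, aa n) * (∏ n ∈ range N, aa n ^ eps n)⁻¹ := by
    intro N
    rw [← prod_pow, ← prod_inv_distrib, ← prod_mul_distrib]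
    refine prod_congr rfl fun n _ => ?_
    have hane : aa n ≠ 0 := ne_of_gt (aa_pos n)
    have h1 : aa n ^ (((2 * tm n : ℕ)) : ℤ) = (aa n ^ tm n)^2 := by
      rw [zpow_natCast, mul_comm 2 (tm n), pow_mul]
    have h2 : (((2 * tm n : ℕ)) : ℤ) = 1 - eps n := by
      simp only [eps]; push_cast; ring
    rw [← h1, h2, zpow_sub₀ hane, zpow_one, div_eq_mul_inv]
  have hGW : Tendsto (fun N => (∏ n ∈ range N, aa n ^ tm n)^2) atTop
      (𝓝 (Real.Gamma (1/2) * Real.Gamma (3/4) / Real.Gamma (1/4) * W⁻¹)) := by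
    simp only [hPsq]
    exact tendsto_prod_aa.mul (hW.inv₀ (ne_of_gt hWpos))
  set L := Real.pi ^ ((3:ℝ)/4) * Real.sqrt 2 / Real.Gamma (1/4) with hLdef
  have h14 : 0 < Real.Gamma (1/4) := Real.Gamma_pos_of_pos (by norm_num)
  have h34 : 0 < Real.Gamma (3/4) := Real.Gamma_pos_of_pos (by norm_num)
  have hs2 : Real.sqrt 2 * Real.sqrt 2 = 2 := Real.mul_self_sqrt (by norm_num)
  have hLpos : 0 < L := by
    have hp34 : (0:ℝ) < Real.pi ^ ((3:ℝ)/4) := Real.rpow_pos_of_pos Real.pi_pos _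
    have hs2' : (0:ℝ) < Real.sqrt 2 := Real.sqrt_pos.mpr (by norm_num)
    rw [hLdef]; positivity
  -- reflection formula at 1/4
  have hrefl : Real.Gamma (1/4) * Real.Gamma (3/4) = Real.pi * Real.sqrt 2 := by
    have h := Real.Gamma_mul_Gamma_one_sub (1/4)
    have h34' : (1:ℝ) - 1/4 = 3/4 := by norm_num
    rw [h34', show Real.pi * (1/4) = Real.pi/4 by ring, Real.sin_pi_div_four] at h
    rw [h, div_eq_iff (by positivity : Real.sqrt 2/2 ≠ 0)]
    linear_combination (-(Real.pi)/2) * hs2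
  have hWinv : W⁻¹ = Real.sqrt 2 := by
    have hWval : W = Real.sqrt (1/2) := by rw [← Real.sqrt_sq hWpos.le, hWsq]
    rw [hWval, show (1:ℝ)/2 = 2⁻¹ by norm_num, Real.sqrt_inv, inv_inv]
  have hG34 : Real.Gamma (3/4) = Real.pi * Real.sqrt 2 / Real.Gamma (1/4) := by
    rw [eq_div_iff (ne_of_gt h14)]
    linarith [hrefl]
  have hpow : Real.pi ^ ((3:ℝ)/4) * Real.pi ^ ((3:ℝ)/4) = Real.sqrt Real.pi * Real.pi := by
    rw [← Real.rpow_add Real.pi_pos, Real.sqrt_eq_rpow]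
    nth_rewrite 3 [← Real.rpow_one Real.pi]
    rw [← Real.rpow_add Real.pi_pos]
    norm_num
  have hkey : Real.Gamma (1/2) * Real.Gamma (3/4) / Real.Gamma (1/4) * W⁻¹ = L^2 := by
    rw [Real.Gamma_one_half_eq, hWinv, hG34, hLdef]
    linear_combination ((Real.Gamma (1/4))⁻¹^2 * (Real.sqrt Real.pi * Real.pi
        - Real.pi ^ ((3:ℝ)/4) * Real.pi ^ ((3:ℝ)/4))) * hs2
      + (-(2:ℝ) * (Real.Gamma (1/4))⁻¹^2) * hpow
  rw [hkey] at hGW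
  have hfin := hGW.sqrt
  rw [Real.sqrt_sq hLpos.le] at hfin
  refine hfin.congr fun N => ?_
  exact Real.sqrt_sq (prod_nonneg fun n _ => pow_nonneg (aa_pos n).le _)
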